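/- Fix σ > 0 and γ > 0, and define, for d ≥ 0, V(d) = min( d², inf_{σ_U ∈ (0, ∞)} [ σ_U²·(σ⁴ + σ_U²·d²)/(σ² + σ_U²)² + (γ/2)·ln((σ² + σ_U²)/σ_U²) ] ). Then for every Γ > 0 there exists τ > 0 such that for all d ≥ 0, V(d) ≤ Γ if and only if d ≤ τ. That is, users prefer working with the AI (optimal loss at most the no-AI cost Γ) exactly when their uniqueness is below a threshold. -/

import Mathlib

set_option maxHeartbeats 1000000


/-- Threshold structure of AI adoption: for the optimal utility loss `V` in the
unbiased model, for every no-AI cost `Γ > 0` there is a uniqueness threshold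
`τ > 0` such that a user works with the AI (`V(d) ≤ Γ`) iff `d ≤ τ`. -/
theorem adoption_threshold (σ γ : ℝ) (hσ : 0 < σ) (hγ : 0 < γ)
    (V : ℝ → ℝ)
    (hV : ∀ d, V d = min (d ^ 2)
      (⨅ σU : Set.Ioi (0 : ℝ),
        (σU : ℝ) ^ 2 * (σ ^ 4 + (σU : ℝ) ^ 2 * d ^ 2) / (σ ^ 2 + (σU : ℝ) ^ 2) ^ 2
          + γ / 2 * Real.log ((σ ^ 2 + (σU : ℝ) ^ 2) / (σU : ℝ) ^ 2))) :
    ∀ Γ : ℝ, 0 < Γ → ∃ τ : ℝ, 0 < τ ∧ ∀ d : ℝ, 0 ≤ d → (V d ≤ Γ ↔ d ≤ τ) := by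
  haveI : Nonempty (Set.Ioi (0:ℝ)) := ⟨⟨1, by norm_num⟩⟩
  intro Γ hΓ
  set f : ℝ → Set.Ioi (0:ℝ) → ℝ := fun d σU =>
      (σU : ℝ) ^ 2 * (σ ^ 4 + (σU : ℝ) ^ 2 * d ^ 2) / (σ ^ 2 + (σU : ℝ) ^ 2) ^ 2
          + γ / 2 * Real.log ((σ ^ 2 + (σU : ℝ) ^ 2) / (σU : ℝ) ^ 2) with hfdef
  have hV' : ∀ d, V d = min (d ^ 2) (⨅ u : Set.Ioi (0:ℝ), f d u) := hV
  clear_value f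
  clear hV
  have hu2 : ∀ u : Set.Ioi (0:ℝ), (0:ℝ) < (u:ℝ)^2 := fun u => pow_pos u.2 2
  have hden : ∀ u : Set.Ioi (0:ℝ), (0:ℝ) < σ^2 + (u:ℝ)^2 :=
    fun u => add_pos (pow_pos hσ 2) (hu2 u)
  have hden2 : ∀ u : Set.Ioi (0:ℝ), (0:ℝ) < (σ^2 + (u:ℝ)^2)^2 :=
    fun u => pow_pos (hden u) 2
  have hu4 : ∀ u : Set.Ioi (0:ℝ), (u:ℝ)^4 ≤ (σ^2 + (u:ℝ)^2)^2 := by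
    intro u
    nlinarith [sq_nonneg σ, hu2 u, pow_pos hσ 2, sq_nonneg ((u:ℝ)*σ)]
  have hlog : ∀ u : Set.Ioi (0:ℝ), 0 ≤ Real.log ((σ^2 + (u:ℝ)^2)/(u:ℝ)^2) := by
    intro u
    apply Real.log_nonneg
    rw [le_div_iff₀ (hu2 u)]
    nlinarith [pow_pos hσ 2]
  have hfnn : ∀ d (u : Set.Ioi (0:ℝ)), 0 ≤ f d u := by
    intro d u
    rw [hfdef]
    apply add_nonneg
    · apply div_nonneg _ (hden2 u).le
      have : (0:ℝ) ≤ σ^4 + (u:ℝ)^2 * d^2 := by positivity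
      positivity
    · exact mul_nonneg (by positivity) (hlog u)
  have hbdd : ∀ d, BddBelow (Set.range (f d)) := by
    intro d
    exact ⟨0, by rintro x ⟨u, rfl⟩; exact hfnn d u⟩
  -- monotonicity of f in d
  have hmono_f : ∀ (u : Set.Ioi (0:ℝ)) d d', 0 ≤ d → d ≤ d' → f d u ≤ f d' u := by
    intro u d d' hd hdd'
    have h2 : d^2 ≤ d'^2 := pow_le_pow_left₀ hd hdd' 2
    rw [hfdef]
    apply add_le_add_left
    apply (div_le_div_iff_of_pos_right (hden2 u)).mpr
    nlinarith [mul_nonneg (mul_nonneg (hu2 u).le (hu2 u).le) (sub_nonneg.mpr h2)]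
  -- Lipschitz-type bound
  have hlip : ∀ (u : Set.Ioi (0:ℝ)) d d', 0 ≤ d → d ≤ d' → f d' u ≤ f d u + (d'^2 - d^2) := by
    intro u d d' hd hdd'
    have h2 : d^2 ≤ d'^2 := pow_le_pow_left₀ hd hdd' 2
    rw [hfdef]
    have hA := hden2 u
    rw [add_assoc, add_comm (γ / 2 * _), ← add_assoc, add_le_add_iff_right]
    rw [div_add' _ _ _ (ne_of_gt hA), div_le_div_iff₀ hA hA]
    have hprod : 0 ≤ (d'^2 - d^2) * ((σ^2 + (u:ℝ)^2)^2 - (u:ℝ)^4) * (σ^2 + (u:ℝ)^2)^2 :=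
      mul_nonneg (mul_nonneg (by linarith) (by linarith [hu4 u])) hA.le
    nlinarith [hprod]
  -- monotonicity of V
  have hVmono : ∀ d d', 0 ≤ d → d ≤ d' → V d ≤ V d' := by
    intro d d' hd hdd'
    rw [hV', hV']
    exact min_le_min (pow_le_pow_left₀ hd hdd' 2)
      (ciInf_mono (hbdd d) (fun u => hmono_f u d d' hd hdd'))
  have hVle : ∀ d, V d ≤ d^2 := fun d => (hV' d) ▸ min_le_left _ _
  -- large D where V D > Γ
  obtain ⟨L, hLdef⟩ : ∃ L : ℝ, L = 2*(Γ+1)/γ := ⟨_, rfl⟩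
  have hL : 0 < L := by rw [hLdef]; positivity
  obtain ⟨E, hEdef⟩ : ∃ E : ℝ, E = Real.exp L := ⟨_, rfl⟩
  have hE1 : 1 ≤ E := by rw [hEdef]; exact Real.one_le_exp hL.le
  have hEpos : 0 < E := lt_of_lt_of_le one_pos hE1
  obtain ⟨D, hDdef⟩ : ∃ D : ℝ, D = E * Real.sqrt (Γ+1) := ⟨_, rfl⟩
  have hΓ1 : (0:ℝ) < Γ + 1 := by linarith
  have hDpos : 0 < D := by
    rw [hDdef]; positivity
  have hD2 : E^2 * (Γ+1) = D^2 := by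
    rw [hDdef, mul_pow, Real.sq_sqrt hΓ1.le]
  have hD2' : Γ + 1 ≤ D^2 := by
    have hE2 : (1:ℝ) ≤ E^2 := by nlinarith [hE1]
    nlinarith [hD2, mul_nonneg (sub_nonneg.mpr hE2) hΓ1.le]
  have hD : ∀ u : Set.Ioi (0:ℝ), Γ + 1 ≤ f D u := by
    intro u
    by_cases hc : Γ + 1 ≤ γ/2 * Real.log ((σ^2 + (u:ℝ)^2)/(u:ℝ)^2)
    · have h1 : 0 ≤ (u:ℝ)^2 * (σ^4 + (u:ℝ)^2 * D^2) / (σ^2 + (u:ℝ)^2)^2 := by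
        have : (0:ℝ) ≤ σ^4 + (u:ℝ)^2 * D^2 := by positivity
        positivity
      rw [hfdef]
      linarith
    · push_neg at hc
      have hlogL : Real.log ((σ^2 + (u:ℝ)^2)/(u:ℝ)^2) < L := by
        rw [hLdef, lt_div_iff₀ hγ]
        nlinarith [hlog u]
      have hr : (σ^2 + (u:ℝ)^2)/(u:ℝ)^2 < E := by
        rw [hEdef]
        calc (σ^2 + (u:ℝ)^2)/(u:ℝ)^2
            = Real.exp (Real.log ((σ^2 + (u:ℝ)^2)/(u:ℝ)^2)) := by
              rw [Real.exp_log (div_pos (hden u) (hu2 u))]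
          _ < Real.exp L := Real.exp_lt_exp.mpr hlogL
      have hr2 : σ^2 + (u:ℝ)^2 ≤ E * (u:ℝ)^2 := by
        rw [div_lt_iff₀ (hu2 u)] at hr
        linarith
      have hkey : Γ + 1 ≤ (u:ℝ)^2 * (σ^4 + (u:ℝ)^2 * D^2) / (σ^2 + (u:ℝ)^2)^2 := by
        rw [le_div_iff₀ (hden2 u)]
        have h3 : (σ^2 + (u:ℝ)^2)^2 ≤ (E * (u:ℝ)^2)^2 :=
          pow_le_pow_left₀ (hden u).le hr2 2
        have h5 : E^2 * (Γ+1) * (u:ℝ)^4 = D^2 * (u:ℝ)^4 := by rw [hD2]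
        nlinarith [h5, mul_nonneg hΓ1.le (sub_nonneg.mpr h3),
          mul_nonneg (hu2 u).le (by positivity : (0:ℝ) ≤ σ^4)]
      rw [hfdef]
      have := mul_nonneg (by positivity : (0:ℝ) ≤ γ/2) (hlog u)
      linarith
  have hVD : Γ + 1 ≤ V D := by
    rw [hV']
    exact le_min hD2' (le_ciInf hD)
  -- the set S and threshold τ
  obtain ⟨S, hSdef⟩ : ∃ S : Set ℝ, S = {d | 0 ≤ d ∧ V d ≤ Γ} := ⟨_, rfl⟩
  have hsqrt : Real.sqrt Γ ∈ S := by
    rw [hSdef]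
    constructor
    · exact Real.sqrt_nonneg Γ
    · calc V (Real.sqrt Γ) ≤ (Real.sqrt Γ)^2 := hVle _
        _ = Γ := Real.sq_sqrt hΓ.le
  have hSne : S.Nonempty := ⟨_, hsqrt⟩
  have hSbdd : BddAbove S := by
    refine ⟨D, fun d hd => ?_⟩
    rw [hSdef] at hd
    by_contra hcon
    push_neg at hcon
    have := hVmono D d hDpos.le hcon.le
    have h2 := hd.2
    linarith
  obtain ⟨τ, hτdef⟩ : ∃ τ : ℝ, τ = sSup S := ⟨_, rfl⟩
  have hτpos : 0 < τ := by
    have h1 : Real.sqrt Γ ≤ τ := hτdef ▸ le_csSup hSbdd hsqrt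
    have h2 : 0 < Real.sqrt Γ := Real.sqrt_pos.mpr hΓ
    linarith
  -- V τ ≤ Γ
  have hVτ : V τ ≤ Γ := by
    refine le_of_forall_pos_le_add ?_
    intro ε hε
    obtain ⟨ε', hε'def⟩ : ∃ e : ℝ, e = ε / (4*τ + 4) := ⟨_, rfl⟩
    have hε'pos : 0 < ε' := by rw [hε'def]; positivity
    obtain ⟨s, hsS, hs⟩ := exists_lt_of_lt_csSup hSne (by linarith : τ - ε' < sSup S)
    have hsτ : s ≤ τ := hτdef ▸ le_csSup hSbdd hsS
    rw [hSdef] at hsS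
    have hs0 : 0 ≤ s := hsS.1
    have hΔ : τ^2 - s^2 ≤ ε/2 := by
      have h1 : (τ - s) * (τ + s) ≤ ε' * (2*τ + 2) := by
        apply mul_le_mul (by linarith) (by linarith) (by linarith) hε'pos.le
      have h2 : ε' * (2*τ + 2) = ε/2 := by
        rw [hε'def]
        field_simp
        ring
      nlinarith
    have hsΓ : V s ≤ Γ := hsS.2
    rw [hV'] at hsΓ
    rcases min_le_iff.mp hsΓ with h | h
    · -- s^2 ≤ Γ
      have := hVle τ
      linarith
    · -- iInf (f s) ≤ Γ
      have hlt : (⨅ u : Set.Ioi (0:ℝ), f s u) < Γ + ε/2 := by linarith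
      obtain ⟨u, hu⟩ := exists_lt_of_ciInf_lt hlt
      have h1 : V τ ≤ f τ u := by
        rw [hV']
        exact le_trans (min_le_right _ _) (ciInf_le (hbdd τ) u)
      have h2 : f τ u ≤ f s u + (τ^2 - s^2) := hlip u s τ hs0 hsτ
      linarith
  refine ⟨τ, hτpos, fun d hd => ⟨fun h => ?_, fun h => ?_⟩⟩
  · rw [hτdef]
    exact le_csSup hSbdd (by rw [hSdef]; exact ⟨hd, h⟩)
  · exact le_trans (hVmono d τ hd h) hVτ
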